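/- arXiv:2108.04304 — 4 statements merged into one kernel-verified Lean document; each statement's English description precedes it below -/
import Mathlib

section
/- In a Cartesian differential category, for any map f : A → B, its linearization L[f] := D[f] ∘ ι₁ (where ι₁ = ⟨0, 1_A⟩ : A → A × A) is a D-linear map, i.e. D[L[f]] = L[f] ∘ π₁. -/
/-!
Self-contained formalization of Cartesian left additive categories (CLAC),
following Blute–Cockett–Seely / Ikonicoff–Lemay.
-/

universe u v

structure CLAC where
  Obj : Type u
  Hom : Obj → Obj → Type v
  id : (A : Obj) → Hom A A
  comp : {A B C : Obj} → Hom B C → Hom A B → Hom A C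
  id_comp : ∀ {A B : Obj} (f : Hom A B), comp (id B) f = f
  comp_id : ∀ {A B : Obj} (f : Hom A B), comp f (id A) = f
  comp_assoc : ∀ {A B C D : Obj} (h : Hom C D) (g : Hom B C) (f : Hom A B),
    comp (comp h g) f = comp h (comp g f)
  top : Obj
  toTop : (A : Obj) → Hom A top
  toTop_unique : ∀ {A : Obj} (f : Hom A top), f = toTop A
  prod : Obj → Obj → Obj
  p0 : {A B : Obj} → Hom (prod A B) A
  p1 : {A B : Obj} → Hom (prod A B) B
  pair : {C A B : Obj} → Hom C A → Hom C B → Hom C (prod A B)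
  p0_pair : ∀ {C A B : Obj} (f : Hom C A) (g : Hom C B), comp p0 (pair f g) = f
  p1_pair : ∀ {C A B : Obj} (f : Hom C A) (g : Hom C B), comp p1 (pair f g) = g
  pair_unique : ∀ {C A B : Obj} (h : Hom C (prod A B)), pair (comp p0 h) (comp p1 h) = h
  add : {A B : Obj} → Hom A B → Hom A B → Hom A B
  zero : {A B : Obj} → Hom A B
  add_comm' : ∀ {A B : Obj} (f g : Hom A B), add f g = add g f
  add_assoc' : ∀ {A B : Obj} (f g h : Hom A B), add (add f g) h = add f (add g h)
  add_zero' : ∀ {A B : Obj} (f : Hom A B), add f zero = f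
  comp_add : ∀ {A' A B : Obj} (f g : Hom A B) (x : Hom A' A),
    comp (add f g) x = add (comp f x) (comp g x)
  comp_zero : ∀ {A' A B : Obj} (x : Hom A' A), comp (zero : Hom A B) x = zero
  p0_additive : ∀ {A' A B : Obj} (x y : Hom A' (prod A B)),
    comp p0 (add x y) = add (comp p0 x) (comp p0 y)
  p0_zero : ∀ {A' A B : Obj},
    comp (p0 : Hom (prod A B) A) (zero : Hom A' (prod A B)) = zero
  p1_additive : ∀ {A' A B : Obj} (x y : Hom A' (prod A B)),
    comp p1 (add x y) = add (comp p1 x) (comp p1 y)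
  p1_zero : ∀ {A' A B : Obj},
    comp (p1 : Hom (prod A B) B) (zero : Hom A' (prod A B)) = zero

namespace CLAC

variable (C : CLAC.{u, v})

/-- The injection `ι₀ := ⟨1, 0⟩ : A → A × B`. -/
def i0 {A B : C.Obj} : C.Hom A (C.prod A B) := C.pair (C.id A) C.zero

/-- The injection `ι₁ := ⟨0, 1⟩ : B → A × B`. -/
def i1 {A B : C.Obj} : C.Hom B (C.prod A B) := C.pair C.zero (C.id B)

/-- The product of maps `f × g`. -/
def pmap {A B A' B' : C.Obj} (f : C.Hom A A') (g : C.Hom B B') :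
    C.Hom (C.prod A B) (C.prod A' B') :=
  C.pair (C.comp f C.p0) (C.comp g C.p1)

/-- The sum map `∇ := π₀ + π₁`. -/
def nabla (A : C.Obj) : C.Hom (C.prod A A) A := C.add C.p0 C.p1

/-- The lifting map `ℓ := ι₀ × ι₁`. -/
def lmap (A : C.Obj) : C.Hom (C.prod A A) (C.prod (C.prod A A) (C.prod A A)) :=
  C.pmap C.i0 C.i1

/-- The interchange map `c := ⟨π₀ × π₀, π₁ × π₁⟩`. -/
def cmap (A : C.Obj) :
    C.Hom (C.prod (C.prod A A) (C.prod A A)) (C.prod (C.prod A A) (C.prod A A)) :=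
  C.pair (C.pmap C.p0 C.p0) (C.pmap C.p1 C.p1)

/-- A map is additive when postcomposition preserves sums and zeros. -/
def Additive {A B : C.Obj} (f : C.Hom A B) : Prop :=
  (∀ {A' : C.Obj} (x y : C.Hom A' A),
      C.comp f (C.add x y) = C.add (C.comp f x) (C.comp f y)) ∧
  (∀ {A' : C.Obj}, C.comp f (C.zero : C.Hom A' A) = C.zero)

end CLAC

/-- The axioms [CD.1]–[CD.7] of a differential combinator on a Cartesian left
additive category. -/
structure IsDiffComb (C : CLAC.{u, v})
    (D : {A B : C.Obj} → C.Hom A B → C.Hom (C.prod A A) B) : Prop where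
  cd1_add : ∀ {A B : C.Obj} (f g : C.Hom A B), D (C.add f g) = C.add (D f) (D g)
  cd1_zero : ∀ {A B : C.Obj}, D (C.zero : C.Hom A B) = C.zero
  cd2_add : ∀ {A B : C.Obj} (f : C.Hom A B),
    C.comp (D f) (C.pmap (C.id A) (C.nabla A)) =
      C.add (C.comp (D f) (C.pmap (C.id A) C.p0)) (C.comp (D f) (C.pmap (C.id A) C.p1))
  cd2_zero : ∀ {A B : C.Obj} (f : C.Hom A B), C.comp (D f) C.i0 = C.zero
  cd3_id : ∀ {A : C.Obj}, D (C.id A) = C.p1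
  cd3_p0 : ∀ {A B : C.Obj}, D (C.p0 : C.Hom (C.prod A B) A) = C.comp C.p0 C.p1
  cd3_p1 : ∀ {A B : C.Obj}, D (C.p1 : C.Hom (C.prod A B) B) = C.comp C.p1 C.p1
  cd4 : ∀ {X A B : C.Obj} (f : C.Hom X A) (g : C.Hom X B),
    D (C.pair f g) = C.pair (D f) (D g)
  cd5 : ∀ {A B B' : C.Obj} (g : C.Hom B B') (f : C.Hom A B),
    D (C.comp g f) = C.comp (D g) (C.pair (C.comp f C.p0) (D f))
  cd6 : ∀ {A B : C.Obj} (f : C.Hom A B), C.comp (D (D f)) (C.lmap A) = D f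
  cd7 : ∀ {A B : C.Obj} (f : C.Hom A B), C.comp (D (D f)) (C.cmap A) = D (D f)


namespace CLAClemmas

variable {C : CLAC.{u, v}}

theorem pair_comp {X A B Y : C.Obj} (f : C.Hom X A) (g : C.Hom X B) (h : C.Hom Y X) :
    C.comp (C.pair f g) h = C.pair (C.comp f h) (C.comp g h) := by
  conv_lhs => rw [← C.pair_unique (C.comp (C.pair f g) h)]
  rw [← C.comp_assoc, ← C.comp_assoc, C.p0_pair, C.p1_pair]

theorem zero_pair {X A B : C.Obj} :
    (C.zero : C.Hom X (C.prod A B)) = C.pair C.zero C.zero := by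
  conv_lhs => rw [← C.pair_unique (C.zero : C.Hom X (C.prod A B))]
  rw [C.p0_zero, C.p1_zero]

theorem add_pair {X A B : C.Obj} (a a' : C.Hom X A) (b b' : C.Hom X B) :
    C.add (C.pair a b) (C.pair a' b') = C.pair (C.add a a') (C.add b b') := by
  conv_lhs => rw [← C.pair_unique (C.add (C.pair a b) (C.pair a' b'))]
  rw [C.p0_additive, C.p1_additive, C.p0_pair, C.p0_pair, C.p1_pair, C.p1_pair]

theorem zero_add' {A B : C.Obj} (f : C.Hom A B) : C.add C.zero f = f := by
  rw [C.add_comm', C.add_zero']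

theorem id_pair {A B : C.Obj} : C.id (C.prod A B) = C.pair C.p0 C.p1 := by
  conv_lhs => rw [← C.pair_unique (C.id (C.prod A B))]
  rw [C.comp_id, C.comp_id]

theorem i0_comp {X A : C.Obj} (h : C.Hom X A) {B : C.Obj} :
    C.comp (C.i0 : C.Hom A (C.prod A B)) h = C.pair h C.zero := by
  rw [CLAC.i0, pair_comp, C.id_comp, C.comp_zero]

theorem i1_comp {X A : C.Obj} (h : C.Hom X A) {B : C.Obj} :
    C.comp (C.i1 : C.Hom A (C.prod B A)) h = C.pair C.zero h := by
  rw [CLAC.i1, pair_comp, C.id_comp, C.comp_zero]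

theorem pair_zero_zero {X A B : C.Obj} :
    C.pair (C.zero : C.Hom X A) (C.zero : C.Hom X B) = C.zero := zero_pair.symm

theorem pair_p0_p1 {A B : C.Obj} :
    C.pair (C.p0 : C.Hom (C.prod A B) A) C.p1 = C.id (C.prod A B) := id_pair.symm

/-- Generalized CD.2 (zero): `D[g] ∘ ⟨h, 0⟩ = 0`. -/
theorem d_zero {X A B : C.Obj}
    (D : {A B : C.Obj} → C.Hom A B → C.Hom (C.prod A A) B)
    (hD : IsDiffComb C D) (g : C.Hom A B) (h : C.Hom X A) :
    C.comp (D g) (C.pair h C.zero) = C.zero := by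
  rw [← i0_comp h, ← C.comp_assoc, hD.cd2_zero, C.comp_zero]

/-- Generalized CD.2 (additivity): `D[g] ∘ ⟨h, a + b⟩ = D[g]∘⟨h,a⟩ + D[g]∘⟨h,b⟩`. -/
theorem d_add {X A B : C.Obj}
    (D : {A B : C.Obj} → C.Hom A B → C.Hom (C.prod A A) B)
    (hD : IsDiffComb C D) (g : C.Hom A B) (h : C.Hom X A) (a b : C.Hom X A) :
    C.comp (D g) (C.pair h (C.add a b)) =
      C.add (C.comp (D g) (C.pair h a)) (C.comp (D g) (C.pair h b)) := by
  have key := congrArg (fun z => C.comp z (C.pair h (C.pair a b))) (hD.cd2_add g)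
  simp only [CLAC.pmap, CLAC.nabla, CLAC.comp_assoc, CLAC.comp_add, pair_comp,
    CLAC.p0_pair, CLAC.p1_pair, CLAC.id_comp] at key
  exact key

end CLAClemmas

open CLAClemmas in
/-- In a Cartesian differential category, the linearization
`L[f] := D[f] ∘ ι₁` of any map `f : A → B` is D-linear, i.e.
`D[L[f]] = L[f] ∘ π₁`. -/
theorem statement5 (C : CLAC.{u, v})
    (D : {A B : C.Obj} → C.Hom A B → C.Hom (C.prod A A) B)
    (hD : IsDiffComb C D) {A B : C.Obj} (f : C.Hom A B) :
    D (C.comp (D f) C.i1) = C.comp (C.comp (D f) C.i1) C.p1 := by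
  have hDi1 : D (C.i1 : C.Hom A (C.prod A A)) = C.comp C.i1 C.p1 := by
    rw [CLAC.i1, hD.cd4, hD.cd1_zero, hD.cd3_id, pair_comp, C.comp_zero,
      C.id_comp]
  have hA : D (C.comp (D f) C.i1) =
      C.comp (D (D f)) (C.pair (C.comp C.i1 C.p0) (C.comp C.i1 C.p1)) := by
    rw [hD.cd5, hDi1]
  have hB : C.comp (C.cmap A) (C.pair (C.comp C.i1 C.p0) (C.comp C.i1 C.p1)) =
      C.pair C.zero (C.id (C.prod A A)) := by
    simp only [CLAC.cmap, CLAC.pmap, CLAC.i1, pair_comp, CLAC.comp_assoc,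
      CLAC.p0_pair, CLAC.p1_pair, CLAC.p0_zero, CLAC.p1_zero, CLAC.comp_zero,
      CLAC.id_comp, CLAC.comp_id, pair_zero_zero, pair_p0_p1]
  have hC : C.comp (D (D f)) (C.pair (C.comp C.i1 C.p0) (C.comp C.i1 C.p1)) =
      C.comp (D (D f)) (C.pair C.zero (C.id (C.prod A A))) := by
    conv_lhs => rw [← hD.cd7 f, C.comp_assoc, hB]
  have hid : C.id (C.prod A A) =
      C.add (C.comp (C.i0 : C.Hom A (C.prod A A)) C.p0) (C.comp C.i1 C.p1) := by
    simp only [CLAC.i0, CLAC.i1, pair_comp, CLAC.id_comp, CLAC.comp_zero,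
      add_pair, CLAC.add_zero', zero_add', pair_p0_p1]
  have hB1 : C.comp (C.cmap A)
      (C.pair (C.zero : C.Hom (C.prod A A) (C.prod A A))
        (C.comp (C.i0 : C.Hom A (C.prod A A)) C.p0)) =
      C.pair (C.pair C.zero C.p0) C.zero := by
    simp only [CLAC.cmap, CLAC.pmap, CLAC.i0, pair_comp, CLAC.comp_assoc,
      CLAC.p0_pair, CLAC.p1_pair, CLAC.p0_zero, CLAC.p1_zero, CLAC.comp_zero,
      CLAC.id_comp, CLAC.comp_id, pair_zero_zero]
  have h1 : C.comp (D (D f))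
      (C.pair (C.zero : C.Hom (C.prod A A) (C.prod A A))
        (C.comp (C.i0 : C.Hom A (C.prod A A)) C.p0)) = C.zero := by
    conv_lhs => rw [← hD.cd7 f, C.comp_assoc, hB1]
    exact d_zero D hD (D f) (C.pair C.zero C.p0)
  have hB2 : C.comp (C.lmap A)
      (C.comp (C.i1 : C.Hom A (C.prod A A)) (C.p1 : C.Hom (C.prod A A) A)) =
      C.pair C.zero
        (C.comp (C.i1 : C.Hom A (C.prod A A)) (C.p1 : C.Hom (C.prod A A) A)) := by
    simp only [CLAC.lmap, CLAC.pmap, CLAC.i0, CLAC.i1, pair_comp,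
      CLAC.comp_assoc, CLAC.p0_pair, CLAC.p1_pair, CLAC.p0_zero, CLAC.p1_zero,
      CLAC.comp_zero, CLAC.id_comp, CLAC.comp_id, pair_zero_zero]
  have h2 : C.comp (D (D f))
      (C.pair (C.zero : C.Hom (C.prod A A) (C.prod A A))
        (C.comp (C.i1 : C.Hom A (C.prod A A)) C.p1)) =
      C.comp (C.comp (D f) C.i1) C.p1 := by
    conv_rhs => rw [C.comp_assoc, ← hD.cd6 f, C.comp_assoc, hB2]
  rw [hA, hC, hid, d_add D hD (D f) C.zero _ _, h1, h2, zero_add']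
end

section
/- Let (!, δ, ε, ∂) be a Cartesian differential comonad on a category X with finite biproducts, and equip the coKleisli category with the differential combinator D[f] := f ∘ ∂_A for coKleisli maps f : !(A) → B. Then a coKleisli map f : !(A) → B is D-linear in the coKleisli category if and only if f ∘ ∂_A ∘ !(ι₁) = f, where ι₁ = ⟨0, 1_A⟩ : A → A × A. -/
/-!
Self-contained formalization of Cartesian left additive categories (CLAC),
following Blute–Cockett–Seely / Ikonicoff–Lemay.
-/

universe u v

/-- The data of a comonad `(!, δ, ε)` on `C`. -/
structure ComonadData (C : CLAC.{u, v}) where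
  obj : C.Obj → C.Obj
  map : {A B : C.Obj} → C.Hom A B → C.Hom (obj A) (obj B)
  δ : (A : C.Obj) → C.Hom (obj A) (obj (obj A))
  ε : (A : C.Obj) → C.Hom (obj A) A

/-- The comonad laws: functoriality, naturality of `δ` and `ε`, coassociativity
and the counit laws. -/
structure IsComonad (C : CLAC.{u, v}) (T : ComonadData C) : Prop where
  map_id : ∀ (A : C.Obj), T.map (C.id A) = C.id (T.obj A)
  map_comp : ∀ {A B B' : C.Obj} (g : C.Hom B B') (f : C.Hom A B),
    T.map (C.comp g f) = C.comp (T.map g) (T.map f)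
  δ_nat : ∀ {A B : C.Obj} (f : C.Hom A B),
    C.comp (T.map (T.map f)) (T.δ A) = C.comp (T.δ B) (T.map f)
  ε_nat : ∀ {A B : C.Obj} (f : C.Hom A B),
    C.comp f (T.ε A) = C.comp (T.ε B) (T.map f)
  coassoc : ∀ (A : C.Obj),
    C.comp (T.δ (T.obj A)) (T.δ A) = C.comp (T.map (T.δ A)) (T.δ A)
  counit_left : ∀ (A : C.Obj), C.comp (T.ε (T.obj A)) (T.δ A) = C.id (T.obj A)
  counit_right : ∀ (A : C.Obj), C.comp (T.map (T.ε A)) (T.δ A) = C.id (T.obj A)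

/-- The axioms [dc.1]–[dc.6] for a differential combinator transformation
`∂_A : !(A × A) → !(A)` on a comonad. -/
structure IsDCT (C : CLAC.{u, v}) (T : ComonadData C)
    (pd : (A : C.Obj) → C.Hom (T.obj (C.prod A A)) (T.obj A)) : Prop where
  nat : ∀ {A B : C.Obj} (f : C.Hom A B),
    C.comp (pd B) (T.map (C.pmap f f)) = C.comp (T.map f) (pd A)
  dc1 : ∀ (A : C.Obj), C.comp (pd A) (T.map C.i0) = C.zero
  dc2 : ∀ (A : C.Obj),
    C.comp (pd A) (T.map (C.pmap (C.id A) (C.nabla A))) =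
      C.comp (pd A)
        (C.add (T.map (C.pmap (C.id A) C.p0)) (T.map (C.pmap (C.id A) C.p1)))
  dc3 : ∀ (A : C.Obj),
    C.comp (T.ε A) (pd A) = C.comp C.p1 (T.ε (C.prod A A))
  dc4 : ∀ (A : C.Obj),
    C.comp (T.δ A) (pd A) =
      C.comp (pd (T.obj A))
        (C.comp (T.map (C.pair (T.map C.p0) (pd A))) (T.δ (C.prod A A)))
  dc5 : ∀ (A : C.Obj),
    C.comp (pd A) (C.comp (pd (C.prod A A)) (T.map (C.lmap A))) = pd A
  dc6 : ∀ (A : C.Obj),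
    C.comp (pd A) (C.comp (pd (C.prod A A)) (T.map (C.cmap A))) =
      C.comp (pd A) (pd (C.prod A A))

/-- A D-linear unit `η_A : A → !(A)` for a Cartesian differential comonad:
a natural transformation satisfying [du.1] `ε ∘ η = 1` and
[du.2] `∂ ∘ !(ι₁) = η ∘ ε`. -/
structure IsDLinUnit (C : CLAC.{u, v}) (T : ComonadData C)
    (pd : (A : C.Obj) → C.Hom (T.obj (C.prod A A)) (T.obj A))
    (η : (A : C.Obj) → C.Hom A (T.obj A)) : Prop where
  nat : ∀ {A B : C.Obj} (f : C.Hom A B),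
    C.comp (η B) f = C.comp (T.map f) (η A)
  du1 : ∀ (A : C.Obj), C.comp (T.ε A) (η A) = C.id A
  du2 : ∀ (A : C.Obj),
    C.comp (pd A) (T.map C.i1) = C.comp (η A) (T.ε A)


attribute [simp] CLAC.i0 CLAC.i1 CLAC.pmap CLAC.nabla CLAC.cmap

namespace CLAC

variable {C : CLAC.{u, v}}

theorem pair_ext {X A B : C.Obj} {f g : C.Hom X (C.prod A B)}
    (h0 : C.comp C.p0 f = C.comp C.p0 g) (h1 : C.comp C.p1 f = C.comp C.p1 g) :
    f = g := by
  rw [← C.pair_unique f, ← C.pair_unique g, h0, h1]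

@[simp] theorem zero_add' {A B : C.Obj} (f : C.Hom A B) : C.add C.zero f = f := by
  rw [C.add_comm', C.add_zero']

@[simp] theorem add_zero'' {A B : C.Obj} (f : C.Hom A B) : C.add f C.zero = f :=
  C.add_zero' f

@[simp] theorem comp_assoc' {A B D E : C.Obj} (h : C.Hom D E) (g : C.Hom B D)
    (f : C.Hom A B) : C.comp (C.comp h g) f = C.comp h (C.comp g f) :=
  C.comp_assoc h g f

@[simp] theorem p0_pair' {X A B : C.Obj} (f : C.Hom X A) (g : C.Hom X B) :
    C.comp C.p0 (C.pair f g) = f := C.p0_pair f g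

@[simp] theorem p1_pair' {X A B : C.Obj} (f : C.Hom X A) (g : C.Hom X B) :
    C.comp C.p1 (C.pair f g) = g := C.p1_pair f g

@[simp] theorem id_comp' {A B : C.Obj} (f : C.Hom A B) : C.comp (C.id B) f = f :=
  C.id_comp f

@[simp] theorem comp_id' {A B : C.Obj} (f : C.Hom A B) : C.comp f (C.id A) = f :=
  C.comp_id f

@[simp] theorem comp_zero' {A' A B : C.Obj} (x : C.Hom A' A) :
    C.comp (C.zero : C.Hom A B) x = C.zero := C.comp_zero x

@[simp] theorem p0_zero' {A' A B : C.Obj} :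
    C.comp (C.p0 : C.Hom (C.prod A B) A) (C.zero : C.Hom A' (C.prod A B)) = C.zero :=
  C.p0_zero

@[simp] theorem p1_zero' {A' A B : C.Obj} :
    C.comp (C.p1 : C.Hom (C.prod A B) B) (C.zero : C.Hom A' (C.prod A B)) = C.zero :=
  C.p1_zero

@[simp] theorem p0_additive' {A' A B : C.Obj} (x y : C.Hom A' (C.prod A B)) :
    C.comp C.p0 (C.add x y) = C.add (C.comp C.p0 x) (C.comp C.p0 y) :=
  C.p0_additive x y

@[simp] theorem p1_additive' {A' A B : C.Obj} (x y : C.Hom A' (C.prod A B)) :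
    C.comp C.p1 (C.add x y) = C.add (C.comp C.p1 x) (C.comp C.p1 y) :=
  C.p1_additive x y

@[simp] theorem comp_add' {A' A B : C.Obj} (f g : C.Hom A B) (x : C.Hom A' A) :
    C.comp (C.add f g) x = C.add (C.comp f x) (C.comp g x) := C.comp_add f g x

@[simp] theorem pair_comp {X Y A B : C.Obj} (f : C.Hom Y A) (g : C.Hom Y B)
    (x : C.Hom X Y) : C.comp (C.pair f g) x = C.pair (C.comp f x) (C.comp g x) := by
  conv_lhs => rw [← C.pair_unique (C.comp (C.pair f g) x)]
  rw [← C.comp_assoc, ← C.comp_assoc, C.p0_pair, C.p1_pair]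

@[simp] theorem pair_zero_zero {X A B : C.Obj} :
    C.pair (C.zero : C.Hom X A) (C.zero : C.Hom X B) = C.zero := by
  have h := C.pair_unique (C.zero : C.Hom X (C.prod A B))
  rw [C.p0_zero, C.p1_zero] at h
  exact h

@[simp] theorem pair_p0_p1 {A B : C.Obj} :
    C.pair (C.p0 : C.Hom (C.prod A B) A) (C.p1 : C.Hom (C.prod A B) B) =
      C.id (C.prod A B) := by
  have h := C.pair_unique (C.id (C.prod A B))
  rw [C.comp_id, C.comp_id] at h
  exact h

theorem p1_i1 {A B : C.Obj} : C.comp C.p1 (C.i1 (A := A) (B := B)) = C.id B := by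
  rw [i1, C.p1_pair]

end CLAC

/-- For a Cartesian differential comonad `(!, δ, ε, ∂)` on a
category with finite biproducts, equip the coKleisli category with
`D[f] := f ∘ ∂_A`.  A coKleisli map `f : !(A) → B` is D-linear in the coKleisli
category (i.e. `D[f]` equals the coKleisli composite of `f` with the coKleisli
second projection `π₁ ∘ ε`) if and only if `f ∘ ∂_A ∘ !(ι₁) = f`. -/
theorem statement12 (C : CLAC.{u, v})
    (hbiprod : ∀ {A B : C.Obj} (f : C.Hom A B), C.Additive f)
    (T : ComonadData C) (hT : IsComonad C T)
    (pd : (A : C.Obj) → C.Hom (T.obj (C.prod A A)) (T.obj A))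
    (hpd : IsDCT C T pd) {A B : C.Obj} (f : C.Hom (T.obj A) B) :
    (C.comp f (pd A) =
        C.comp f
          (C.comp (T.map (C.comp C.p1 (T.ε (C.prod A A)))) (T.δ (C.prod A A)))) ↔
      C.comp f (C.comp (pd A) (T.map C.i1)) = f := by
  have hR : C.comp (T.map (C.comp C.p1 (T.ε (C.prod A A)))) (T.δ (C.prod A A))
      = T.map (C.p1 (A := A) (B := A)) := by
    rw [hT.map_comp, C.comp_assoc, hT.counit_right, C.comp_id]
  rw [hR]
  constructor
  · intro h
    rw [← C.comp_assoc, h, C.comp_assoc, ← hT.map_comp, CLAC.p1_i1, hT.map_id,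
      C.comp_id]
  · intro h
    have hii : C.pmap (C.i1 (A := A) (B := A)) (C.i1 (A := A) (B := A)) = C.comp (C.cmap A) (C.i1 (A := C.prod A A) (B := C.prod A A)) := by
      refine CLAC.pair_ext (CLAC.pair_ext ?_ ?_) (CLAC.pair_ext ?_ ?_) <;> simp
    have hs1 : C.comp (C.pmap (C.i1 (A := A) (B := A)) (C.i1 (A := A) (B := A))) (C.comp (C.i1 (A := A) (B := A)) (C.p1 (A := A) (B := A))) = (C.pair (C.zero : C.Hom (C.prod A A) (C.prod A A)) (C.pair (C.zero : C.Hom (C.prod A A) A) (C.p1 (A := A) (B := A)))) := by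
      refine CLAC.pair_ext (CLAC.pair_ext ?_ ?_) (CLAC.pair_ext ?_ ?_) <;> simp
    have hIdSplit : (C.i1 (A := C.prod A A) (B := C.prod A A)) =
        C.comp (C.pmap (C.id (C.prod A A)) (C.nabla (C.prod A A))) (C.pair (C.zero : C.Hom (C.prod A A) (C.prod A A)) (C.pair (C.pair (C.p0 (A := A) (B := A)) (C.zero : C.Hom (C.prod A A) A)) (C.pair (C.zero : C.Hom (C.prod A A) A) (C.p1 (A := A) (B := A))))) := by
      refine CLAC.pair_ext (CLAC.pair_ext ?_ ?_) (CLAC.pair_ext ?_ ?_) <;> simp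
    have hE1 : C.comp (C.pmap (C.id (C.prod A A)) (C.p0 (A := (C.prod A A)) (B := (C.prod A A)))) (C.pair (C.zero : C.Hom (C.prod A A) (C.prod A A)) (C.pair (C.pair (C.p0 (A := A) (B := A)) (C.zero : C.Hom (C.prod A A) A)) (C.pair (C.zero : C.Hom (C.prod A A) A) (C.p1 (A := A) (B := A))))) =
        (C.pair (C.zero : C.Hom (C.prod A A) (C.prod A A)) (C.pair (C.p0 (A := A) (B := A)) (C.zero : C.Hom (C.prod A A) A))) := by
      refine CLAC.pair_ext (CLAC.pair_ext ?_ ?_) (CLAC.pair_ext ?_ ?_) <;> simp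
    have hE2 : C.comp (C.pmap (C.id (C.prod A A)) (C.p1 (A := (C.prod A A)) (B := (C.prod A A)))) (C.pair (C.zero : C.Hom (C.prod A A) (C.prod A A)) (C.pair (C.pair (C.p0 (A := A) (B := A)) (C.zero : C.Hom (C.prod A A) A)) (C.pair (C.zero : C.Hom (C.prod A A) A) (C.p1 (A := A) (B := A))))) =
        (C.pair (C.zero : C.Hom (C.prod A A) (C.prod A A)) (C.pair (C.zero : C.Hom (C.prod A A) A) (C.p1 (A := A) (B := A)))) := by
      refine CLAC.pair_ext (CLAC.pair_ext ?_ ?_) (CLAC.pair_ext ?_ ?_) <;> simp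
    have hzs : (C.pair (C.zero : C.Hom (C.prod A A) (C.prod A A)) (C.pair (C.p0 (A := A) (B := A)) (C.zero : C.Hom (C.prod A A) A))) = C.comp (C.cmap A) (C.comp (C.i0 (A := C.prod A A) (B := C.prod A A)) (C.pair (C.zero : C.Hom (C.prod A A) A) (C.p0 (A := A) (B := A)))) := by
      refine CLAC.pair_ext (CLAC.pair_ext ?_ ?_) (CLAC.pair_ext ?_ ?_) <;> simp
    have hzero : C.comp (pd A) (C.comp (pd (C.prod A A)) (T.map (C.pair (C.zero : C.Hom (C.prod A A) (C.prod A A)) (C.pair (C.p0 (A := A) (B := A)) (C.zero : C.Hom (C.prod A A) A))))) = C.zero := by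
      calc C.comp (pd A) (C.comp (pd (C.prod A A)) (T.map (C.pair (C.zero : C.Hom (C.prod A A) (C.prod A A)) (C.pair (C.p0 (A := A) (B := A)) (C.zero : C.Hom (C.prod A A) A)))))
          = C.comp (C.comp (pd A) (C.comp (pd (C.prod A A)) (T.map (C.cmap A))))
              (C.comp (T.map (C.i0 (A := C.prod A A) (B := C.prod A A))) (T.map (C.pair (C.zero : C.Hom (C.prod A A) A) (C.p0 (A := A) (B := A))))) := by
            rw [hzs, hT.map_comp, hT.map_comp]
            simp only [CLAC.comp_assoc']
        _ = C.comp (C.comp (pd A) (pd (C.prod A A)))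
              (C.comp (T.map (C.i0 (A := C.prod A A) (B := C.prod A A))) (T.map (C.pair (C.zero : C.Hom (C.prod A A) A) (C.p0 (A := A) (B := A))))) := by
            rw [hpd.dc6]
        _ = C.comp (pd A) (C.comp (C.comp (pd (C.prod A A)) (T.map (C.i0 (A := C.prod A A) (B := C.prod A A))))
              (T.map (C.pair (C.zero : C.Hom (C.prod A A) A) (C.p0 (A := A) (B := A))))) := by
            simp only [CLAC.comp_assoc']
        _ = C.zero := by rw [hpd.dc1, C.comp_zero, (hbiprod (pd A)).2]
    have key1 : C.comp (pd A) (C.comp (T.map (C.i1 (A := A) (B := A))) (pd A)) =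
        C.comp (pd A) (C.comp (pd (C.prod A A)) (T.map (C.i1 (A := C.prod A A) (B := C.prod A A)))) := by
      calc C.comp (pd A) (C.comp (T.map (C.i1 (A := A) (B := A))) (pd A))
          = C.comp (pd A) (C.comp (pd (C.prod A A)) (T.map (C.pmap (C.i1 (A := A) (B := A)) (C.i1 (A := A) (B := A))))) := by
            rw [hpd.nat]
        _ = C.comp (C.comp (pd A) (C.comp (pd (C.prod A A)) (T.map (C.cmap A))))
              (T.map (C.i1 (A := C.prod A A) (B := C.prod A A))) := by
            rw [hii, hT.map_comp]
            simp only [CLAC.comp_assoc']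
        _ = C.comp (C.comp (pd A) (pd (C.prod A A))) (T.map (C.i1 (A := C.prod A A) (B := C.prod A A))) := by
            rw [hpd.dc6]
        _ = C.comp (pd A) (C.comp (pd (C.prod A A)) (T.map (C.i1 (A := C.prod A A) (B := C.prod A A)))) := by
            simp only [CLAC.comp_assoc']
    have key2 : C.comp (pd A) (C.comp (T.map (C.i1 (A := A) (B := A)))
          (C.comp (pd A) (T.map (C.comp (C.i1 (A := A) (B := A)) (C.p1 (A := A) (B := A)))))) =
        C.comp (pd A) (C.comp (pd (C.prod A A)) (T.map (C.pair (C.zero : C.Hom (C.prod A A) (C.prod A A)) (C.pair (C.zero : C.Hom (C.prod A A) A) (C.p1 (A := A) (B := A)))))) := by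
      calc C.comp (pd A) (C.comp (T.map (C.i1 (A := A) (B := A)))
            (C.comp (pd A) (T.map (C.comp (C.i1 (A := A) (B := A)) (C.p1 (A := A) (B := A))))))
          = C.comp (C.comp (pd A) (C.comp (T.map (C.i1 (A := A) (B := A))) (pd A)))
              (T.map (C.comp (C.i1 (A := A) (B := A)) (C.p1 (A := A) (B := A)))) := by
            simp only [CLAC.comp_assoc']
        _ = C.comp (C.comp (pd A) (C.comp (pd (C.prod A A)) (T.map (C.pmap (C.i1 (A := A) (B := A)) (C.i1 (A := A) (B := A))))))
              (T.map (C.comp (C.i1 (A := A) (B := A)) (C.p1 (A := A) (B := A)))) := by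
            rw [hpd.nat]
        _ = C.comp (pd A) (C.comp (pd (C.prod A A)) (T.map (C.pair (C.zero : C.Hom (C.prod A A) (C.prod A A)) (C.pair (C.zero : C.Hom (C.prod A A) A) (C.p1 (A := A) (B := A)))))) := by
            simp only [CLAC.comp_assoc']
            rw [← hT.map_comp, hs1]
    have key3 : C.comp (pd A) (C.comp (pd (C.prod A A)) (T.map (C.i1 (A := C.prod A A) (B := C.prod A A)))) =
        C.comp (pd A) (C.comp (pd (C.prod A A)) (T.map (C.pair (C.zero : C.Hom (C.prod A A) (C.prod A A)) (C.pair (C.zero : C.Hom (C.prod A A) A) (C.p1 (A := A) (B := A)))))) := by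
      calc C.comp (pd A) (C.comp (pd (C.prod A A)) (T.map (C.i1 (A := C.prod A A) (B := C.prod A A))))
          = C.comp (C.comp (pd A) (C.comp (pd (C.prod A A))
              (T.map (C.pmap (C.id (C.prod A A)) (C.nabla (C.prod A A)))))) (T.map (C.pair (C.zero : C.Hom (C.prod A A) (C.prod A A)) (C.pair (C.pair (C.p0 (A := A) (B := A)) (C.zero : C.Hom (C.prod A A) A)) (C.pair (C.zero : C.Hom (C.prod A A) A) (C.p1 (A := A) (B := A)))))) := by
            rw [hIdSplit, hT.map_comp]
            simp only [CLAC.comp_assoc']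
        _ = C.comp (C.comp (pd A) (C.comp (pd (C.prod A A))
              (C.add (T.map (C.pmap (C.id (C.prod A A)) (C.p0 (A := (C.prod A A)) (B := (C.prod A A)))))
                (T.map (C.pmap (C.id (C.prod A A)) (C.p1 (A := (C.prod A A)) (B := (C.prod A A))))))))
              (T.map (C.pair (C.zero : C.Hom (C.prod A A) (C.prod A A)) (C.pair (C.pair (C.p0 (A := A) (B := A)) (C.zero : C.Hom (C.prod A A) A)) (C.pair (C.zero : C.Hom (C.prod A A) A) (C.p1 (A := A) (B := A)))))) := by
            rw [hpd.dc2]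
        _ = C.add (C.comp (pd A) (C.comp (pd (C.prod A A)) (T.map (C.pair (C.zero : C.Hom (C.prod A A) (C.prod A A)) (C.pair (C.p0 (A := A) (B := A)) (C.zero : C.Hom (C.prod A A) A))))))
              (C.comp (pd A) (C.comp (pd (C.prod A A)) (T.map (C.pair (C.zero : C.Hom (C.prod A A) (C.prod A A)) (C.pair (C.zero : C.Hom (C.prod A A) A) (C.p1 (A := A) (B := A))))))) := by
            rw [(hbiprod (pd (C.prod A A))).1, (hbiprod (pd A)).1, C.comp_add]
            simp only [CLAC.comp_assoc']
            rw [← hT.map_comp, ← hT.map_comp, hE1, hE2]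
        _ = C.comp (pd A) (C.comp (pd (C.prod A A)) (T.map (C.pair (C.zero : C.Hom (C.prod A A) (C.prod A A)) (C.pair (C.zero : C.Hom (C.prod A A) A) (C.p1 (A := A) (B := A)))))) := by
            rw [hzero, CLAC.zero_add']
    have hL := key1.trans (key3.trans key2.symm)
    calc C.comp f (pd A)
        = C.comp (C.comp f (C.comp (pd A) (T.map (C.i1 (A := A) (B := A))))) (pd A) := by rw [h]
      _ = C.comp f (C.comp (pd A) (C.comp (T.map (C.i1 (A := A) (B := A))) (pd A))) := by
          simp only [CLAC.comp_assoc']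
      _ = C.comp f (C.comp (pd A) (C.comp (T.map (C.i1 (A := A) (B := A)))
            (C.comp (pd A) (T.map (C.comp (C.i1 (A := A) (B := A)) (C.p1 (A := A) (B := A))))))) := by
          rw [hL]
      _ = C.comp (C.comp f (C.comp (pd A) (T.map (C.i1 (A := A) (B := A)))))
            (C.comp (pd A) (T.map (C.comp (C.i1 (A := A) (B := A)) (C.p1 (A := A) (B := A))))) := by
          simp only [CLAC.comp_assoc']
      _ = C.comp f (C.comp (pd A) (T.map (C.comp (C.i1 (A := A) (B := A)) (C.p1 (A := A) (B := A))))) := by rw [h]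
      _ = C.comp (C.comp f (C.comp (pd A) (T.map (C.i1 (A := A) (B := A))))) (T.map (C.p1 (A := A) (B := A))) := by
          rw [hT.map_comp]
          simp only [CLAC.comp_assoc']
      _ = C.comp f (T.map (C.p1 (A := A) (B := A))) := by rw [h]
end

section
/- Let (!, δ, ε, ∂) be a Cartesian differential comonad on a category X with finite biproducts. Then for every map f : A → B in X, the coKleisli map F(f) := f ∘ ε_A : !(A) → B satisfies F(f) ∘ ∂_A ∘ !(ι₁) = F(f); hence F(f) is D-linear in the coKleisli category. -/
/-!
Self-contained formalization of Cartesian left additive categories (CLAC),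
following Blute–Cockett–Seely / Ikonicoff–Lemay.
-/

universe u v

/-- For a Cartesian differential comonad `(!, δ, ε, ∂)` on a
category with finite biproducts and any map `f : A → B` of the base category,
the coKleisli map `F(f) := f ∘ ε_A` satisfies `F(f) ∘ ∂_A ∘ !(ι₁) = F(f)`;
hence `F(f)` is D-linear in the coKleisli category, i.e. `D[F(f)] = F(f) ∘ ∂_A`
equals the coKleisli composite of `F(f)` with the coKleisli second projection
`π₁ ∘ ε`. -/
theorem statement13 (C : CLAC.{u, v})
    (hbiprod : ∀ {A B : C.Obj} (f : C.Hom A B), C.Additive f)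
    (T : ComonadData C) (hT : IsComonad C T)
    (pd : (A : C.Obj) → C.Hom (T.obj (C.prod A A)) (T.obj A))
    (hpd : IsDCT C T pd) {A B : C.Obj} (f : C.Hom A B) :
    C.comp (C.comp f (T.ε A)) (C.comp (pd A) (T.map C.i1)) = C.comp f (T.ε A) ∧
    C.comp (C.comp f (T.ε A)) (pd A) =
      C.comp (C.comp f (T.ε A))
        (C.comp (T.map (C.comp C.p1 (T.ε (C.prod A A)))) (T.δ (C.prod A A))) := by
  constructor
  · calc C.comp (C.comp f (T.ε A)) (C.comp (pd A) (T.map C.i1))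
        = C.comp f (C.comp (C.comp (T.ε A) (pd A)) (T.map C.i1)) := by
          rw [C.comp_assoc, C.comp_assoc]
      _ = C.comp f (C.comp (C.comp C.p1 (T.ε (C.prod A A))) (T.map C.i1)) := by
          rw [hpd.dc3]
      _ = C.comp f (C.comp C.p1 (C.comp C.i1 (T.ε A))) := by
          rw [C.comp_assoc, hT.ε_nat]
      _ = C.comp f (C.comp (C.comp C.p1 C.i1) (T.ε A)) := by rw [C.comp_assoc]
      _ = C.comp f (T.ε A) := by
          show C.comp f (C.comp (C.comp C.p1 (C.pair C.zero (C.id A))) (T.ε A)) = _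
          rw [C.p1_pair, C.id_comp]
  · calc C.comp (C.comp f (T.ε A)) (pd A)
        = C.comp f (C.comp (T.ε A) (pd A)) := by rw [C.comp_assoc]
      _ = C.comp f (C.comp C.p1 (T.ε (C.prod A A))) := by rw [hpd.dc3]
      _ = C.comp f (C.comp (C.comp C.p1 (T.ε (C.prod A A)))
            (C.comp (T.ε (T.obj (C.prod A A))) (T.δ (C.prod A A)))) := by
          rw [hT.counit_left, C.comp_id]
      _ = C.comp (C.comp f (T.ε A))
            (C.comp (T.map (C.comp C.p1 (T.ε (C.prod A A)))) (T.δ (C.prod A A))) := by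
          conv_rhs => rw [C.comp_assoc f, ← C.comp_assoc (T.ε A)
            (T.map (C.comp C.p1 (T.ε (C.prod A A)))) (T.δ (C.prod A A)), ← hT.ε_nat]
          rw [C.comp_assoc (C.comp C.p1 (T.ε (C.prod A A)))]
end

section
/- Let F be a field and V an F-vector space, and let Zin(V) = ⊕_{n≥1} V^{⊗n} be the free Zinbiel algebra on V with the half-shuffle product <. Define ∂_V : Zin(V) → Zin(V × V) on pure tensors by ∂_V(v₁ ⊗ v₂ ⊗ ⋯ ⊗ v_n) = (0, v₁) ⊗ (v₂, 0) ⊗ ⋯ ⊗ (v_n, 0), extended linearly, and let ι₀ : V → V × V be v ↦ (v, 0) with Zin(ι₀) its functorial extension. Then for all u, w ∈ Zin(V), ∂_V(u < w) = ∂_V(u) < Zin(ι₀)(w). -/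
open scoped TensorProduct DirectSum
open PiTensorProduct

/-- The underlying space of the free Zinbiel algebra on `W`:
`Zin(W) = ⊕_{n ≥ 1} W^{⊗ n}` (indexed so that degree `n` is `W^{⊗ (n+1)}`). -/
abbrev ZinC (F : Type*) [Field F] (W : Type*) [AddCommGroup W] [Module F W] :=
  ⨁ (n : ℕ), ⨂[F] (_ : Fin (n + 1)), W

/-- The pure tensor `v 0 ⊗ v 1 ⊗ ⋯ ⊗ v n` as an element of `Zin(W)`. -/
noncomputable def pureT (F : Type*) [Field F] {W : Type*} [AddCommGroup W]
    [Module F W] (n : ℕ) (v : Fin (n + 1) → W) : ZinC F W :=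
  DirectSum.of (fun n => ⨂[F] (_ : Fin (n + 1)), W) n (tprod F v)

/-- The structure maps of the free Zinbiel algebra on `W`: the half-shuffle
product `hs` (denoted `<`) and the "prepend a letter" operation `L`. -/
structure ZinOps (F : Type*) [Field F] (W : Type*) [AddCommGroup W]
    [Module F W] where
  hs : ZinC F W → ZinC F W → ZinC F W
  L : W → ZinC F W → ZinC F W

/-- The defining properties of the half-shuffle product on the free Zinbiel
algebra `Zin(W) = ⊕_{n≥1} W^{⊗n}`: both operations are bilinear, `L x` sends a
pure tensor `v₁ ⊗ ⋯ ⊗ v_n` to `x ⊗ v₁ ⊗ ⋯ ⊗ v_n`, a single letter acts by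
`x < w = x ⊗ w = L x w`, and `(L x u) < w = L x (u < w + w < u)` (the defining
recursion of the half-shuffle `(v₁ ⊗ ⋯ ⊗ v_n) < (w₁ ⊗ ⋯ ⊗ w_m) =
Σ_σ v₁ ⊗ σ·(v₂ ⊗ ⋯ ⊗ v_n ⊗ w₁ ⊗ ⋯ ⊗ w_m)` over `(n−1, m)`-shuffles `σ`). -/
structure IsZinStruct (F : Type*) [Field F] (W : Type*) [AddCommGroup W]
    [Module F W] (Z : ZinOps F W) : Prop where
  hs_add_left : ∀ u u' w, Z.hs (u + u') w = Z.hs u w + Z.hs u' w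
  hs_add_right : ∀ u w w', Z.hs u (w + w') = Z.hs u w + Z.hs u w'
  hs_smul_left : ∀ (r : F) u w, Z.hs (r • u) w = r • Z.hs u w
  hs_smul_right : ∀ (r : F) u w, Z.hs u (r • w) = r • Z.hs u w
  L_add_left : ∀ (x x' : W) u, Z.L (x + x') u = Z.L x u + Z.L x' u
  L_add_right : ∀ (x : W) u u', Z.L x (u + u') = Z.L x u + Z.L x u'
  L_smul_left : ∀ (r : F) (x : W) u, Z.L (r • x) u = r • Z.L x u
  L_smul_right : ∀ (r : F) (x : W) u, Z.L x (r • u) = r • Z.L x u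
  L_pure : ∀ (x : W) (n : ℕ) (v : Fin (n + 1) → W),
    Z.L x (pureT F n v) = pureT F (n + 1) (Fin.cons x v)
  hs_single : ∀ (x : W) (w : ZinC F W),
    Z.hs (pureT F 0 (fun _ => x)) w = Z.L x w
  hs_rec : ∀ (x : W) (u w : ZinC F W),
    Z.hs (Z.L x u) w = Z.L x (Z.hs u w + Z.hs w u)

section Aux

variable {F : Type*} [Field F]

lemma of_smul_eq {W : Type*} [AddCommGroup W] [Module F W] (n : ℕ) (r : F)
    (x : ⨂[F] (_ : Fin (n + 1)), W) :
    DirectSum.of (fun n => ⨂[F] (_ : Fin (n + 1)), W) n (r • x)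
      = r • DirectSum.of (fun n => ⨂[F] (_ : Fin (n + 1)), W) n x := by
  rw [← DirectSum.lof_eq_of F, map_smul, DirectSum.lof_eq_of]

lemma zin_hom_ext {W : Type*} [AddCommGroup W] [Module F W]
    {M : Type*} [AddCommGroup M] [Module F M]
    (f g : ZinC F W → M)
    (hf_add : ∀ a b, f (a + b) = f a + f b)
    (hf_smul : ∀ (r : F) a, f (r • a) = r • f a)
    (hg_add : ∀ a b, g (a + b) = g a + g b)
    (hg_smul : ∀ (r : F) a, g (r • a) = r • g a)
    (h : ∀ n v, f (pureT F n v) = g (pureT F n v)) :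
    ∀ u, f u = g u := by
  have hf0 : f 0 = 0 := by have := hf_smul 0 0; simpa using this
  have hg0 : g 0 = 0 := by have := hg_smul 0 0; simpa using this
  intro u
  induction u using DirectSum.induction_on with
  | zero => rw [hf0, hg0]
  | of n x =>
      induction x using PiTensorProduct.induction_on with
      | smul_tprod r v =>
          rw [of_smul_eq]
          rw [hf_smul, hg_smul]
          exact congrArg _ (h n v)
      | add x y hx hy =>
          rw [map_add, hf_add, hg_add, hx, hy]
  | add x y hx hy => rw [hf_add, hg_add, hx, hy]

end Aux

/-- Let `V` be an `F`-vector space, `Zin(V) = ⊕_{n≥1} V^{⊗n}`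
the free Zinbiel algebra on `V` with half-shuffle product `<`.  Let
`∂ : Zin(V) → Zin(V × V)` be the linear map with
`∂(v₁ ⊗ v₂ ⊗ ⋯ ⊗ v_n) = (0, v₁) ⊗ (v₂, 0) ⊗ ⋯ ⊗ (v_n, 0)` on pure tensors,
and let `Zin(ι₀) : Zin(V) → Zin(V × V)` be the functorial extension of
`ι₀ : v ↦ (v, 0)` (acting letterwise on pure tensors).  Then for all
`u, w ∈ Zin(V)`:  `∂(u < w) = ∂(u) < Zin(ι₀)(w)`. -/
theorem statement17 (F : Type*) [Field F] (V : Type*) [AddCommGroup V]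
    [Module F V]
    (ZV : ZinOps F V) (hZV : IsZinStruct F V ZV)
    (ZP : ZinOps F (V × V)) (hZP : IsZinStruct F (V × V) ZP)
    (Zι : ZinC F V → ZinC F (V × V))
    (hZι_add : ∀ u u', Zι (u + u') = Zι u + Zι u')
    (hZι_smul : ∀ (r : F) u, Zι (r • u) = r • Zι u)
    (hZι_pure : ∀ (n : ℕ) (v : Fin (n + 1) → V),
      Zι (pureT F n v) = pureT F n (fun i => (v i, 0)))
    (pd : ZinC F V → ZinC F (V × V))
    (hpd_add : ∀ u u', pd (u + u') = pd u + pd u')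
    (hpd_smul : ∀ (r : F) u, pd (r • u) = r • pd u)
    (hpd_pure : ∀ (n : ℕ) (v : Fin (n + 1) → V),
      pd (pureT F n v) =
        pureT F n (fun i => if i = 0 then ((0 : V), v i) else (v i, 0))) :
    ∀ u w : ZinC F V, pd (ZV.hs u w) = ZP.hs (pd u) (Zι w) := by
  
  -- Lemma A: pd ∘ L x = L (0,x) ∘ Zι
  have hA : ∀ (x : V) (w : ZinC F V), pd (ZV.L x w) = ZP.L (0, x) (Zι w) := by
    intro x
    refine zin_hom_ext (fun w => pd (ZV.L x w)) (fun w => ZP.L (0, x) (Zι w))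
      ?_ ?_ ?_ ?_ ?_
    · intro a b; rw [hZV.L_add_right, hpd_add]
    · intro r a; rw [hZV.L_smul_right, hpd_smul]
    · intro a b; rw [hZι_add, hZP.L_add_right]
    · intro r a; rw [hZι_smul, hZP.L_smul_right]
    · intro n v
      rw [hZV.L_pure, hpd_pure, hZι_pure, hZP.L_pure]
      congr 1
      funext i
      refine Fin.cases ?_ (fun j => ?_) i
      · simp
      · simp [Fin.succ_ne_zero]
  -- Lemma B: Zι ∘ L x = L (x,0) ∘ Zι
  have hB : ∀ (x : V) (w : ZinC F V), Zι (ZV.L x w) = ZP.L (x, 0) (Zι w) := by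
    intro x
    refine zin_hom_ext (fun w => Zι (ZV.L x w)) (fun w => ZP.L (x, 0) (Zι w))
      ?_ ?_ ?_ ?_ ?_
    · intro a b; rw [hZV.L_add_right, hZι_add]
    · intro r a; rw [hZV.L_smul_right, hZι_smul]
    · intro a b; rw [hZι_add, hZP.L_add_right]
    · intro r a; rw [hZι_smul, hZP.L_smul_right]
    · intro n v
      rw [hZV.L_pure, hZι_pure, hZι_pure, hZP.L_pure]
      congr 1
      funext i
      refine Fin.cases ?_ (fun j => ?_) i
      · simp
      · simp
  -- one-letter left factor, arbitrary right factor
  have hone : ∀ (va : Fin 1 → V), pureT F 0 va = pureT F 0 (fun _ => va 0) := by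
    intro va
    congr 1
    funext i
    rw [Subsingleton.elim i 0]
  have honeP : ∀ (va : Fin 1 → (V × V)),
      pureT F 0 va = pureT F 0 (fun _ => va 0) := by
    intro va
    congr 1
    funext i
    rw [Subsingleton.elim i 0]
  have hsingle : ∀ (va : Fin 1 → V) (w : ZinC F V),
      Zι (ZV.hs (pureT F 0 va) w) = ZP.hs (Zι (pureT F 0 va)) (Zι w) := by
    intro va w
    rw [hone va, hZV.hs_single, hB, hZι_pure]
    rw [honeP (fun i => ((fun _ => va 0) i, (0 : V))), hZP.hs_single]
  -- Lemma C on pure tensors, by induction on total degree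
  have hCp : ∀ N a b, a + b ≤ N → ∀ (va : Fin (a + 1) → V) (vb : Fin (b + 1) → V),
      Zι (ZV.hs (pureT F a va) (pureT F b vb))
        = ZP.hs (Zι (pureT F a va)) (Zι (pureT F b vb)) := by
    intro N
    induction N with
    | zero =>
        intro a b hab va vb
        obtain ⟨rfl, rfl⟩ : a = 0 ∧ b = 0 := by omega
        exact hsingle va _
    | succ N IH =>
        intro a b hab va vb
        match a, va with
        | 0, va => exact hsingle va _
        | a' + 1, va =>
            have hva : pureT F (a' + 1) va
                = ZV.L (va 0) (pureT F a' (Fin.tail va)) := by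
              rw [hZV.L_pure, Fin.cons_self_tail]
            rw [hva, hZV.hs_rec, hB, hZι_add,
              IH a' b (by omega) _ _, IH b a' (by omega) _ _,
              ← hZP.hs_rec, ← hB]
  -- Lemma C in general, by bilinearity
  have hC1 : ∀ (b : ℕ) (vb : Fin (b + 1) → V) (u : ZinC F V),
      Zι (ZV.hs u (pureT F b vb)) = ZP.hs (Zι u) (Zι (pureT F b vb)) := by
    intro b vb
    refine zin_hom_ext (fun u => Zι (ZV.hs u (pureT F b vb)))
      (fun u => ZP.hs (Zι u) (Zι (pureT F b vb))) ?_ ?_ ?_ ?_ ?_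
    · intro x y; rw [hZV.hs_add_left, hZι_add]
    · intro r x; rw [hZV.hs_smul_left, hZι_smul]
    · intro x y; rw [hZι_add, hZP.hs_add_left]
    · intro r x; rw [hZι_smul, hZP.hs_smul_left]
    · intro n v; exact hCp (n + b) n b le_rfl v vb
  have hC : ∀ u w : ZinC F V, Zι (ZV.hs u w) = ZP.hs (Zι u) (Zι w) := by
    intro u
    refine zin_hom_ext (fun w => Zι (ZV.hs u w))
      (fun w => ZP.hs (Zι u) (Zι w)) ?_ ?_ ?_ ?_ ?_
    · intro x y; rw [hZV.hs_add_right, hZι_add]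
    · intro r x; rw [hZV.hs_smul_right, hZι_smul]
    · intro x y; rw [hZι_add, hZP.hs_add_right]
    · intro r x; rw [hZι_smul, hZP.hs_smul_right]
    · intro n v; exact hC1 n v u
  -- Main statement on pure left factors
  have hmain : ∀ (n : ℕ) (v : Fin (n + 1) → V) (w : ZinC F V),
      pd (ZV.hs (pureT F n v) w) = ZP.hs (pd (pureT F n v)) (Zι w) := by
    intro n
    match n with
    | 0 =>
        intro v w
        rw [hone v, hZV.hs_single, hA, hpd_pure]
        rw [honeP (fun i => if i = 0 then ((0 : V), (fun _ => v 0) i)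
              else ((fun _ => v 0) i, (0 : V)))]
        rw [hZP.hs_single]
        simp
    | n' + 1 =>
        intro v w
        have hv : pureT F (n' + 1) v
            = ZV.L (v 0) (pureT F n' (Fin.tail v)) := by
          rw [hZV.L_pure, Fin.cons_self_tail]
        rw [hv, hZV.hs_rec, hA, hZι_add, hC, hC, ← hZP.hs_rec, ← hA]
  intro u w
  refine zin_hom_ext (fun u => pd (ZV.hs u w))
    (fun u => ZP.hs (pd u) (Zι w)) ?_ ?_ ?_ ?_ ?_ u
  · intro x y; rw [hZV.hs_add_left, hpd_add]
  · intro r x; rw [hZV.hs_smul_left, hpd_smul]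
  · intro x y; rw [hpd_add, hZP.hs_add_left]
  · intro r x; rw [hpd_smul, hZP.hs_smul_left]
  · intro n v; exact hmain n v w
end
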